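/- Minorization inequality for the smoothed likelihood: Let (f_1,…,f_M) ∈ C with Σ_{k=1}^M α_{i,k} N_{h_k} f_k(X_i) > 0 for every i, and define w_{i,j} = α_{i,j} N_{h_j} f_j(X_i) / Σ_{k=1}^M α_{i,k} N_{h_k} f_k(X_i). Then for every (g_1,…,g_M) ∈ C, l_n(g_1,…,g_M) − l_n(f_1,…,f_M) ≥ Σ_{i=1}^n Σ_{j=1}^M w_{i,j} (log N_{h_j} g_j(X_i) − log N_{h_j} f_j(X_i)). -/

import Mathlib

open MeasureTheory Real Set Filter Classical

/-- Scaled kernel `K_h(x) = (1/h) K(x/h)`. -/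
noncomputable def kh (K : ℝ → ℝ) (h x : ℝ) : ℝ := (1 / h) * K (x / h)

/-- The nonlinear smoothing operator
`N_h f(x) = exp (∫ K_h(u - x) log f(u) du)`, with the conventions
`0 · log 0 = 0`, `log 0 = −∞`, `exp (−∞) = 0`: if `f` vanishes on a
non-null part of the (translated) kernel support, or the defining integral
does not exist, the value is `0`. -/
noncomputable def nsmooth (K : ℝ → ℝ) (h : ℝ) (f : ℝ → ℝ) (x : ℝ) : ℝ :=
  if (volume {u : ℝ | kh K h (u - x) ≠ 0 ∧ f u = 0} = 0 ∧
      Integrable (fun u : ℝ => kh K h (u - x) * Real.log (f u)))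
  then Real.exp (∫ u : ℝ, kh K h (u - x) * Real.log (f u))
  else 0

/-- `f` is a probability density function on `ℝ` (w.r.t. Lebesgue measure). -/
def IsPdf (f : ℝ → ℝ) : Prop :=
  Measurable f ∧ (∀ x, 0 ≤ f x) ∧ ∫ x : ℝ, f x = 1

/-- Extended-real logarithm with the convention `log y = −∞` for `y ≤ 0`. -/
noncomputable def logE (y : ℝ) : EReal := if y ≤ 0 then ⊥ else ((Real.log y : ℝ) : EReal)

/-- The smoothed log-likelihood
`l_n(f_1,…,f_M) = Σ_i log (Σ_j α_{i,j} N_{h_j} f_j (X_i))`, valued in `[−∞,∞)`. -/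
noncomputable def smoothedLL (K : ℝ → ℝ) (n M : ℕ) (X : Fin n → ℝ)
    (α : Fin n → Fin M → ℝ) (h : Fin M → ℝ) (f : Fin M → ℝ → ℝ) : EReal :=
  ∑ i : Fin n, logE (∑ j : Fin M, α i j * nsmooth K (h j) (f j) (X i))

/-- The weights `w_{i,j} = α_{i,j} N_{h_j} f_j(X_i) / Σ_k α_{i,k} N_{h_k} f_k(X_i)`. -/
noncomputable def mmWeight (K : ℝ → ℝ) (n M : ℕ) (X : Fin n → ℝ)
    (α : Fin n → Fin M → ℝ) (h : Fin M → ℝ) (f : Fin M → ℝ → ℝ)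
    (i : Fin n) (j : Fin M) : ℝ :=
  α i j * nsmooth K (h j) (f j) (X i) /
    ∑ k : Fin M, α i k * nsmooth K (h k) (f k) (X i)

/-- The majorization–minimization update
`f_j^G(x) = Σ_i w_{i,j} K_{h_j}(x − X_i) / Σ_i w_{i,j}`. -/
noncomputable def mmUpdate (K : ℝ → ℝ) (n M : ℕ) (X : Fin n → ℝ)
    (α : Fin n → Fin M → ℝ) (h : Fin M → ℝ) (f : Fin M → ℝ → ℝ)
    (j : Fin M) (x : ℝ) : ℝ :=
  (∑ i : Fin n, mmWeight K n M X α h f i j * kh K (h j) (x - X i)) /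
    ∑ i : Fin n, mmWeight K n M X α h f i j

lemma nsmooth_nonneg (K : ℝ → ℝ) (h : ℝ) (f : ℝ → ℝ) (x : ℝ) :
    0 ≤ nsmooth K h f x := by
  unfold nsmooth
  split
  · exact (Real.exp_pos _).le
  · exact le_rfl

lemma logE_of_pos {y : ℝ} (hy : 0 < y) : logE y = ((Real.log y : ℝ) : EReal) :=
  if_neg (not_le.2 hy)

lemma ereal_sum_eq_bot {ι : Type*} {s : Finset ι} {f : ι → EReal} {i : ι}
    (hi : i ∈ s) (h : f i = ⊥) : ∑ j ∈ s, f j = ⊥ := by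
  rw [← Finset.add_sum_erase _ _ hi, h, EReal.bot_add]

lemma ereal_coe_sum {ι : Type*} (s : Finset ι) (f : ι → ℝ) :
    ((∑ i ∈ s, f i : ℝ) : EReal) = ∑ i ∈ s, ((f i : ℝ) : EReal) :=
  map_sum (⟨⟨Real.toEReal, EReal.coe_zero⟩, EReal.coe_add⟩ : ℝ →+ EReal) f s

/-- Core real inequality (Jensen-type, via `log x ≤ x - 1`). -/
lemma real_key {M : ℕ} (a b : Fin M → ℝ) (ha : ∀ j, 0 ≤ a j) (hb : ∀ j, 0 ≤ b j)
    (hab : ∀ j, a j ≠ 0 → 0 < b j) (hS : 0 < ∑ j, a j) :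
    Real.log (∑ j, a j) +
      ∑ j, a j / (∑ k, a k) * (Real.log (b j) - Real.log (a j)) ≤
    Real.log (∑ j, b j) := by
  set S := ∑ j, a j with hSdef
  set T := ∑ j, b j with hTdef
  have hj0 : ∃ j, a j ≠ 0 := by
    by_contra hc
    push_neg at hc
    rw [hSdef] at hS
    simp [hc] at hS
  obtain ⟨j0, hj0⟩ := hj0
  have hT : 0 < T := by
    calc (0 : ℝ) < b j0 := hab j0 hj0
    _ ≤ T := Finset.single_le_sum (fun k _ => hb k) (Finset.mem_univ j0)
  have key : ∀ j, a j / S * (Real.log (b j) - Real.log (a j)) ≤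
      b j / T - a j / S + a j / S * (Real.log T - Real.log S) := by
    intro j
    rcases eq_or_lt_of_le (ha j) with h0 | h0
    · rw [← h0]
      simp only [zero_div, zero_mul, sub_zero, add_zero, zero_add]
      exact div_nonneg (hb j) hT.le
    · have hbj : 0 < b j := hab j (ne_of_gt h0)
      have hlog : Real.log (b j * S / (a j * T)) ≤ b j * S / (a j * T) - 1 :=
        Real.log_le_sub_one_of_pos (by positivity)
      have hexp : Real.log (b j * S / (a j * T)) =
          Real.log (b j) - Real.log (a j) - (Real.log T - Real.log S) := by
        rw [Real.log_div (by positivity) (by positivity),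
          Real.log_mul (ne_of_gt hbj) (ne_of_gt hS),
          Real.log_mul (ne_of_gt h0) (ne_of_gt hT)]
        ring
      rw [hexp] at hlog
      have h1 : a j / S * (Real.log (b j) - Real.log (a j) - (Real.log T - Real.log S)) ≤
          a j / S * (b j * S / (a j * T) - 1) :=
        mul_le_mul_of_nonneg_left hlog (by positivity)
      have h2 : a j / S * (b j * S / (a j * T) - 1) = b j / T - a j / S := by
        field_simp
      rw [h2] at h1
      have h3 : a j / S * (Real.log (b j) - Real.log (a j) - (Real.log T - Real.log S)) =
          a j / S * (Real.log (b j) - Real.log (a j)) -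
          a j / S * (Real.log T - Real.log S) := by ring
      linarith [h1, h3.symm.le, h3.le]
  have hsum : ∑ j, (b j / T - a j / S + a j / S * (Real.log T - Real.log S)) =
      Real.log T - Real.log S := by
    rw [Finset.sum_add_distrib, Finset.sum_sub_distrib, ← Finset.sum_div, ← Finset.sum_div,
      ← Finset.sum_mul, ← Finset.sum_div, ← hSdef, ← hTdef]
    field_simp
    ring
  have := Finset.sum_le_sum (fun j (_ : j ∈ Finset.univ) => key j)
  rw [hsum] at this
  linarith

/-- **Minorization inequality for the smoothed likelihood.**
With `w_{i,j} = α_{i,j} N_{h_j} f_j(X_i) / Σ_k α_{i,k} N_{h_k} f_k(X_i)`,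
for every `(g_1,…,g_M) ∈ C`,
`l_n(g) − l_n(f) ≥ Σ_i Σ_j w_{i,j} (log N_{h_j} g_j(X_i) − log N_{h_j} f_j(X_i))`
(with values in `[−∞,∞)`). -/
theorem smoothedLL_minorization
    (K : ℝ → ℝ) (L : ℝ) (hL : 0 < L) (hKmeas : Measurable K)
    (hKnonneg : ∀ t, 0 ≤ K t) (hKsupp : ∀ t, t ∉ Set.Icc (-L) L → K t = 0)
    (hKint : ∫ t : ℝ, K t = 1)
    (n M : ℕ) (X : Fin n → ℝ) (α : Fin n → Fin M → ℝ)
    (hα : ∀ i j, 0 ≤ α i j) (hαsum : ∀ i, ∑ j : Fin M, α i j = 1)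
    (h : Fin M → ℝ) (hh : ∀ j, 0 < h j)
    (f : Fin M → ℝ → ℝ) (hf : ∀ j, IsPdf (f j))
    (hpos : ∀ i, 0 < ∑ k : Fin M, α i k * nsmooth K (h k) (f k) (X i))
    (g : Fin M → ℝ → ℝ) (hg : ∀ j, IsPdf (g j)) :
    smoothedLL K n M X α h f +
        ∑ i : Fin n, ∑ j : Fin M,
          ((mmWeight K n M X α h f i j : ℝ) : EReal) *
            (logE (nsmooth K (h j) (g j) (X i)) - logE (nsmooth K (h j) (f j) (X i)))
      ≤ smoothedLL K n M X α h g := by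
  -- abbreviations
  set w := mmWeight K n M X α h f with hw
  have hwnn : ∀ i j, 0 ≤ w i j := fun i j =>
    div_nonneg (mul_nonneg (hα i j) (nsmooth_nonneg _ _ _ _)) (hpos i).le
  have hwf : ∀ i j, w i j ≠ 0 → 0 < α i j * nsmooth K (h j) (f j) (X i) := by
    intro i j hne
    rcases eq_or_lt_of_le (mul_nonneg (hα i j) (nsmooth_nonneg K (h j) (f j) (X i))) with h0 | h0
    · exfalso; apply hne; rw [hw]; unfold mmWeight; rw [← h0]; simp
    · exact h0
  have hwfpos : ∀ i j, w i j ≠ 0 → 0 < nsmooth K (h j) (f j) (X i) := by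
    intro i j hne
    rcases eq_or_lt_of_le (nsmooth_nonneg K (h j) (f j) (X i)) with h0 | h0
    · exfalso
      have := hwf i j hne
      rw [← h0, mul_zero] at this
      exact lt_irrefl 0 this
    · exact h0
  by_cases hcase : ∀ i j, w i j ≠ 0 → 0 < nsmooth K (h j) (g j) (X i)
  · -- everything reduces to a real inequality
    -- the inner EReal sum equals the coercion of a real sum
    have hinner : ∀ i : Fin n,
        (∑ j : Fin M, ((w i j : ℝ) : EReal) *
          (logE (nsmooth K (h j) (g j) (X i)) - logE (nsmooth K (h j) (f j) (X i)))) =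
        (((∑ j : Fin M, w i j *
          (Real.log (nsmooth K (h j) (g j) (X i)) -
           Real.log (nsmooth K (h j) (f j) (X i)))) : ℝ) : EReal) := by
      intro i
      rw [ereal_coe_sum]
      refine Finset.sum_congr rfl (fun j _ => ?_)
      by_cases hwj : w i j = 0
      · rw [hwj]
        simp
      · rw [logE_of_pos (hcase i j hwj), logE_of_pos (hwfpos i j hwj),
          ← EReal.coe_sub, ← EReal.coe_mul]
    -- the positivity of both mixture sums
    have hTpos : ∀ i : Fin n, 0 < ∑ k : Fin M, α i k * nsmooth K (h k) (g k) (X i) := by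
      intro i
      have : ∃ j, α i j * nsmooth K (h j) (f j) (X i) ≠ 0 := by
        by_contra hc
        push_neg at hc
        have := hpos i
        simp [hc] at this
      obtain ⟨j0, hj0⟩ := this
      have hwj0 : w i j0 ≠ 0 := by
        rw [hw]; unfold mmWeight
        exact div_ne_zero hj0 (ne_of_gt (hpos i))
      have hα0 : 0 < α i j0 := by
        rcases eq_or_lt_of_le (hα i j0) with h0 | h0
        · exfalso; apply hj0; rw [← h0, zero_mul]
        · exact h0
      calc (0 : ℝ) < α i j0 * nsmooth K (h j0) (g j0) (X i) :=
            mul_pos hα0 (hcase i j0 hwj0)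
        _ ≤ ∑ k : Fin M, α i k * nsmooth K (h k) (g k) (X i) :=
            Finset.single_le_sum
              (fun k _ => mul_nonneg (hα i k) (nsmooth_nonneg _ _ _ _))
              (Finset.mem_univ j0)
    -- convert both log-likelihoods to real
    have hLLf : smoothedLL K n M X α h f =
        (((∑ i : Fin n, Real.log (∑ k : Fin M, α i k * nsmooth K (h k) (f k) (X i))) : ℝ) :
          EReal) := by
      rw [ereal_coe_sum]
      exact Finset.sum_congr rfl (fun i _ => logE_of_pos (hpos i))
    have hLLg : smoothedLL K n M X α h g =
        (((∑ i : Fin n, Real.log (∑ k : Fin M, α i k * nsmooth K (h k) (g k) (X i))) : ℝ) :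
          EReal) := by
      rw [ereal_coe_sum]
      exact Finset.sum_congr rfl (fun i _ => logE_of_pos (hTpos i))
    rw [hLLf, hLLg, Finset.sum_congr rfl (fun i _ => hinner i), ← ereal_coe_sum, ← EReal.coe_add,
      EReal.coe_le_coe_iff]
    rw [← Finset.sum_add_distrib]
    refine Finset.sum_le_sum (fun i _ => ?_)
    -- per-observation real inequality via `real_key`
    have hkey := real_key (fun j => α i j * nsmooth K (h j) (f j) (X i))
      (fun j => α i j * nsmooth K (h j) (g j) (X i))
      (fun j => mul_nonneg (hα i j) (nsmooth_nonneg _ _ _ _))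
      (fun j => mul_nonneg (hα i j) (nsmooth_nonneg _ _ _ _))
      (fun j hj => by
        have hwj : w i j ≠ 0 := by
          rw [hw]; unfold mmWeight
          exact div_ne_zero hj (ne_of_gt (hpos i))
        have hα0 : 0 < α i j := by
          rcases eq_or_lt_of_le (hα i j) with h0 | h0
          · exfalso; apply hj; show α i j * nsmooth K (h j) (f j) (X i) = 0
            rw [← h0, zero_mul]
          · exact h0
        exact mul_pos hα0 (hcase i j hwj))
      (hpos i)
    have hrw : ∀ j : Fin M,
        (α i j * nsmooth K (h j) (f j) (X i)) /
            (∑ k, α i k * nsmooth K (h k) (f k) (X i)) *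
          (Real.log (α i j * nsmooth K (h j) (g j) (X i)) -
           Real.log (α i j * nsmooth K (h j) (f j) (X i))) =
        w i j * (Real.log (nsmooth K (h j) (g j) (X i)) -
                 Real.log (nsmooth K (h j) (f j) (X i))) := by
      intro j
      by_cases hj : α i j * nsmooth K (h j) (f j) (X i) = 0
      · have hwj : w i j = 0 := by
          rw [hw]; unfold mmWeight; rw [hj, zero_div]
        rw [hj, hwj, zero_div, zero_mul, zero_mul]
      · have hwj : w i j ≠ 0 := by
          rw [hw]; unfold mmWeight
          exact div_ne_zero hj (ne_of_gt (hpos i))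
        have hα0 : 0 < α i j := by
          rcases eq_or_lt_of_le (hα i j) with h0 | h0
          · exfalso; apply hj; rw [← h0, zero_mul]
          · exact h0
        have hNf : 0 < nsmooth K (h j) (f j) (X i) := hwfpos i j hwj
        have hNg : 0 < nsmooth K (h j) (g j) (X i) := hcase i j hwj
        rw [Real.log_mul (ne_of_gt hα0) (ne_of_gt hNg),
          Real.log_mul (ne_of_gt hα0) (ne_of_gt hNf)]
        rw [hw]; unfold mmWeight
        ring
      -- done per-term rewrite
    calc Real.log (∑ k : Fin M, α i k * nsmooth K (h k) (f k) (X i)) +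
          ∑ j : Fin M, w i j * (Real.log (nsmooth K (h j) (g j) (X i)) -
            Real.log (nsmooth K (h j) (f j) (X i)))
        = Real.log (∑ k : Fin M, α i k * nsmooth K (h k) (f k) (X i)) +
          ∑ j : Fin M, (α i j * nsmooth K (h j) (f j) (X i)) /
              (∑ k, α i k * nsmooth K (h k) (f k) (X i)) *
            (Real.log (α i j * nsmooth K (h j) (g j) (X i)) -
             Real.log (α i j * nsmooth K (h j) (f j) (X i))) := by
          rw [Finset.sum_congr rfl (fun j _ => hrw j)]
      _ ≤ Real.log (∑ k : Fin M, α i k * nsmooth K (h k) (g k) (X i)) := hkey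
  · -- some weight is positive while the corresponding `nsmooth g` vanishes: LHS = ⊥
    push_neg at hcase
    obtain ⟨i, j, hwj, hng⟩ := hcase
    have hng0 : nsmooth K (h j) (g j) (X i) = 0 :=
      le_antisymm hng (nsmooth_nonneg _ _ _ _)
    have hterm : ((w i j : ℝ) : EReal) *
        (logE (nsmooth K (h j) (g j) (X i)) - logE (nsmooth K (h j) (f j) (X i))) = ⊥ := by
      have hNf : 0 < nsmooth K (h j) (f j) (X i) := hwfpos i j hwj
      rw [hng0, logE_of_pos hNf]
      have : logE 0 = ⊥ := if_pos le_rfl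
      rw [this, EReal.bot_sub]
      exact EReal.coe_mul_bot_of_pos (lt_of_le_of_ne (hwnn i j) (Ne.symm hwj))
    have hsumj : (∑ j' : Fin M, ((w i j' : ℝ) : EReal) *
        (logE (nsmooth K (h j') (g j') (X i)) - logE (nsmooth K (h j') (f j') (X i)))) = ⊥ :=
      ereal_sum_eq_bot (Finset.mem_univ j) hterm
    have hsumi : (∑ i' : Fin n, ∑ j' : Fin M, ((w i' j' : ℝ) : EReal) *
        (logE (nsmooth K (h j') (g j') (X i')) -
         logE (nsmooth K (h j') (f j') (X i')))) = ⊥ :=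
      ereal_sum_eq_bot (Finset.mem_univ i) hsumj
    rw [hsumi, EReal.add_bot]
    exact bot_le
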